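/- Lagrange inversion for formal power series: let x = z(1 - \sum_{n≥1} b_n z^n) as formal power series in z, and let z = x(1 + \sum_{n≥1} a_n x^n) be its compositional inverse. Then a_n = (1/(n+1)) \sum_{λ} binomial(n+k, k) * multinomial(k; k_1,...,k_n) * \prod_{j=1}^{n} b_j^{k_j}, where the sum is over all tuples (k_1,...,k_n) of nonnegative integers with \sum_j k_j = k and \sum_j j*k_j = n. -/

import Mathlib

open PowerSeries

/-- The finite set of tuples `(k_1, …, k_n)` of nonnegative integers with
`∑ j, j * k_j = n` (indexed by `j : Fin n`, part size `j+1`). -/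
def partitionTuples (n : ℕ) : Finset (Fin n → ℕ) :=
  (Fintype.piFinset fun _ : Fin n => Finset.range (n + 1)).filter
    fun v => ∑ j : Fin n, ((j : ℕ) + 1) * v j = n

/-- The series `z = x(1 + ∑_{n≥1} a_n x^n)`. -/
noncomputable def revSeries (a : ℕ → ℚ) : PowerSeries ℚ :=
  PowerSeries.mk fun m => if m = 0 then 0 else if m = 1 then 1 else a (m - 1)

namespace LagAux

open Finset


/-- coefficient below order vanishes for powers of a series with zero constant term -/
lemma coeff_pow_eq_zero {B : PowerSeries ℚ} (hB : constantCoeff B = 0)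
    {i d : ℕ} (h : i < d) : coeff i (B ^ d) = 0 := by
  have hX : (X : PowerSeries ℚ) ^ d ∣ B ^ d :=
    pow_dvd_pow_of_dvd (PowerSeries.X_dvd_iff.mpr hB) d
  exact PowerSeries.X_pow_dvd_iff.mp hX i h

/-- composition with a fixed series of positive order, defined coefficientwise -/
noncomputable def pcomp (F G : PowerSeries ℚ) : PowerSeries ℚ :=
  PowerSeries.mk fun m => ∑ d ∈ range (m + 1), coeff d G * coeff m (F ^ d)

lemma coeff_pcomp (F G : PowerSeries ℚ) (m : ℕ) :
    coeff m (pcomp F G) = ∑ d ∈ range (m + 1), coeff d G * coeff m (F ^ d) := by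
  simp [pcomp]

lemma coeff_mul_pcomp (P F G : PowerSeries ℚ) (hF : constantCoeff F = 0) (m : ℕ) :
    coeff m (P * pcomp F G) =
      ∑ d ∈ range (m + 1), coeff d G * coeff m (P * F ^ d) := by
  rw [PowerSeries.coeff_mul]
  have h1 : ∀ p ∈ antidiagonal m,
      coeff p.1 P * coeff p.2 (pcomp F G)
        = ∑ d ∈ range (m + 1), coeff d G * (coeff p.1 P * coeff p.2 (F ^ d)) := by
    intro p hp
    rw [coeff_pcomp]
    have hle : p.2 + 1 ≤ m + 1 := by
      have := Finset.HasAntidiagonal.antidiagonal.snd_le hp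
      omega
    rw [Finset.mul_sum]
    rw [← Finset.sum_subset (Finset.range_subset_range.mpr hle)]
    · exact Finset.sum_congr rfl fun d hd => by ring
    · intro d hd hd2
      have : p.2 < d := by simp at hd hd2; omega
      rw [coeff_pow_eq_zero hF this]
      simp
  rw [Finset.sum_congr rfl h1, Finset.sum_comm]
  refine Finset.sum_congr rfl fun d hd => ?_
  rw [← Finset.mul_sum, PowerSeries.coeff_mul]

/-- key double-sum exchange lemma -/
lemma key {B : PowerSeries ℚ} (hB : constantCoeff B = 0) {G H : PowerSeries ℚ}
    {x y : ℕ → ℚ}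
    (hG : ∀ i, coeff i G = ∑ k ∈ range (i + 1), x k * coeff i (B ^ k))
    (hH : ∀ i, coeff i H = ∑ k ∈ range (i + 1), y k * coeff i (B ^ k))
    (m : ℕ) :
    coeff m (G * H) =
      ∑ k ∈ range (m + 1), (∑ p ∈ antidiagonal k, x p.1 * y p.2) * coeff m (B ^ k) := by
  have main : coeff m (G * H)
      = ∑ k1 ∈ range (m + 1), ∑ k2 ∈ range (m + 1),
          x k1 * y k2 * coeff m (B ^ (k1 + k2)) := by
    rw [PowerSeries.coeff_mul]
    have h1 : ∀ p ∈ antidiagonal m,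
        coeff p.1 G * coeff p.2 H
          = ∑ k1 ∈ range (m + 1), ∑ k2 ∈ range (m + 1),
              x k1 * y k2 * (coeff p.1 (B ^ k1) * coeff p.2 (B ^ k2)) := by
      intro p hp
      have h1le : p.1 + 1 ≤ m + 1 := by have := Finset.HasAntidiagonal.antidiagonal.fst_le hp; omega
      have h2le : p.2 + 1 ≤ m + 1 := by have := Finset.HasAntidiagonal.antidiagonal.snd_le hp; omega
      rw [hG, hH]
      have e1 : (∑ k ∈ range (p.1 + 1), x k * coeff p.1 (B ^ k))
          = ∑ k ∈ range (m + 1), x k * coeff p.1 (B ^ k) :=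
        Finset.sum_subset (Finset.range_subset_range.mpr h1le) (fun d hd hd2 => by
          have : p.1 < d := by simp at hd hd2; omega
          rw [coeff_pow_eq_zero hB this, mul_zero])
      have e2 : (∑ k ∈ range (p.2 + 1), y k * coeff p.2 (B ^ k))
          = ∑ k ∈ range (m + 1), y k * coeff p.2 (B ^ k) :=
        Finset.sum_subset (Finset.range_subset_range.mpr h2le) (fun d hd hd2 => by
          have : p.2 < d := by simp at hd hd2; omega
          rw [coeff_pow_eq_zero hB this, mul_zero])
      rw [e1, e2, Finset.sum_mul_sum]
      exact Finset.sum_congr rfl fun k1 _ => Finset.sum_congr rfl fun k2 _ => by ring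
    rw [Finset.sum_congr rfl h1, Finset.sum_comm]
    refine Finset.sum_congr rfl fun k1 _ => ?_
    rw [Finset.sum_comm]
    refine Finset.sum_congr rfl fun k2 _ => ?_
    rw [← Finset.mul_sum, ← PowerSeries.coeff_mul, ← pow_add]
  rw [main]
  -- now regroup the square sum into antidiagonals
  rw [← Finset.sum_product']
  have hrhs : ∀ k ∈ range (m+1), (∑ p ∈ antidiagonal k, x p.1 * y p.2) * coeff m (B ^ k)
      = ∑ p ∈ antidiagonal k, x p.1 * y p.2 * coeff m (B ^ (p.1 + p.2)) := by
    intro k hk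
    rw [Finset.sum_mul]
    exact Finset.sum_congr rfl fun p hp => by
      rw [Finset.HasAntidiagonal.mem_antidiagonal] at hp; rw [hp]
  rw [Finset.sum_congr rfl hrhs]
  rw [← Finset.sum_biUnion (by
    intro s hs t ht hst
    refine Finset.disjoint_left.mpr fun p hp hq => ?_
    rw [Finset.HasAntidiagonal.mem_antidiagonal] at hp hq
    exact hst (hp ▸ hq ▸ rfl))]
  refine (Finset.sum_subset ?_ ?_).symm
  · intro p hp
    simp only [Finset.mem_biUnion, Finset.mem_range, Finset.HasAntidiagonal.mem_antidiagonal] at hp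
    obtain ⟨k, hk, hpk⟩ := hp
    simp only [Finset.mem_product, Finset.mem_range]
    omega
  · intro p hp hp2
    simp only [Finset.mem_biUnion, Finset.mem_range, Finset.HasAntidiagonal.mem_antidiagonal] at hp2
    have : m < p.1 + p.2 := by
      by_contra hc
      exact hp2 ⟨p.1 + p.2, by omega, rfl⟩
    rw [coeff_pow_eq_zero hB this, mul_zero]


lemma hstick (q k : ℕ) : ∑ i ∈ range (k + 1), (q + i).choose i = (q + k + 1).choose k := by
  induction k with
  | zero => simp
  | succ k ih =>
    rw [Finset.sum_range_succ, ih]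
    have h2 : q + (k+1) = q + k + 1 := by omega
    rw [h2, Nat.choose_succ_succ' (q + k + 1) k]

lemma shape_one_sub {B : PowerSeries ℚ} (hB : constantCoeff B = 0) (i : ℕ) :
    coeff i (1 - B) = ∑ k ∈ range (i + 1),
      (if k = 0 then (1:ℚ) else if k = 1 then -1 else 0) * coeff i (B ^ k) := by
  rcases Nat.eq_zero_or_pos i with h0 | hpos
  · subst h0
    simp [hB]
  · have hsub : ({0, 1} : Finset ℕ) ⊆ range (i + 1) := by
      intro k hk
      simp only [Finset.mem_insert, Finset.mem_singleton] at hk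
      simp only [Finset.mem_range]
      omega
    rw [← Finset.sum_subset hsub (fun k _ hk2 => by
      simp only [Finset.mem_insert, Finset.mem_singleton] at hk2
      push_neg at hk2
      simp [hk2.1, hk2.2])]
    rw [Finset.sum_pair (by norm_num)]
    have h1 : i ≠ 0 := by omega
    simp [PowerSeries.coeff_one, h1]

lemma xsum (k : ℕ) : (∑ p ∈ antidiagonal k,
    (if p.1 = 0 then (1:ℚ) else if p.1 = 1 then -1 else 0) * 1) = if k = 0 then 1 else 0 := by
  rw [Finset.Nat.sum_antidiagonal_eq_sum_range_succ_mk]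
  rcases Nat.eq_zero_or_pos k with h0 | hpos
  · subst h0; simp
  · have hsub : ({0, 1} : Finset ℕ) ⊆ range (k + 1) := by
      intro j hj
      simp only [Finset.mem_insert, Finset.mem_singleton] at hj
      simp only [Finset.mem_range]; omega
    rw [← Finset.sum_subset hsub (fun j _ hj2 => by
      simp only [Finset.mem_insert, Finset.mem_singleton] at hj2
      push_neg at hj2
      simp [hj2.1, hj2.2])]
    rw [Finset.sum_pair (by norm_num)]
    have : k ≠ 0 := by omega
    simp [this]

lemma coeff_inv_one_sub {B : PowerSeries ℚ} (hB : constantCoeff B = 0) (i : ℕ) :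
    coeff i ((1 - B)⁻¹) = ∑ k ∈ range (i + 1), (1:ℚ) * coeff i (B ^ k) := by
  have hc : constantCoeff (1 - B) ≠ 0 := by
    rw [map_sub, hB, map_one]; norm_num
  set E : PowerSeries ℚ := PowerSeries.mk fun i => ∑ k ∈ range (i + 1), (1:ℚ) * coeff i (B ^ k)
    with hEdef
  have hEshape : ∀ i, coeff i E = ∑ k ∈ range (i + 1), (1:ℚ) * coeff i (B ^ k) := by
    intro i; rw [hEdef, PowerSeries.coeff_mk]
  have h1 : (1 - B) * E = 1 := by
    ext m
    rw [key hB (shape_one_sub hB) hEshape m]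
    have : ∀ k ∈ range (m+1),
        (∑ p ∈ antidiagonal k, (if p.1 = 0 then (1:ℚ) else if p.1 = 1 then -1 else 0) * 1)
          * coeff m (B ^ k) = (if k = 0 then (1:ℚ) else 0) * coeff m (B ^ k) := by
      intro k _; rw [xsum]
    rw [Finset.sum_congr rfl this]
    simp only [ite_mul, one_mul, zero_mul]
    rw [Finset.sum_ite_eq' (range (m+1)) 0]
    simp
  have hE : E = (1 - B)⁻¹ :=
    (PowerSeries.eq_inv_iff_mul_eq_one hc).mpr (by rw [mul_comm]; exact h1)
  rw [← hE, hEshape]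

lemma coeff_inv_pow_aux {B : PowerSeries ℚ} (hB : constantCoeff B = 0) (p m : ℕ) :
    coeff m (((1 - B)⁻¹) ^ (p + 1))
      = ∑ k ∈ range (m + 1), (((p + k).choose k : ℕ) : ℚ) * coeff m (B ^ k) := by
  induction p generalizing m with
  | zero =>
    rw [pow_one, coeff_inv_one_sub hB]
    simp
  | succ p ih =>
    rw [pow_succ]
    rw [key hB (G := (1 - B)⁻¹ ^ (p+1)) (H := (1 - B)⁻¹)
      (x := fun k => (((p + k).choose k : ℕ) : ℚ)) (y := fun _ => 1) ih
      (coeff_inv_one_sub hB) m]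
    refine Finset.sum_congr rfl fun k _ => ?_
    congr 1
    rw [Finset.Nat.sum_antidiagonal_eq_sum_range_succ_mk]
    have : ∑ i ∈ range (k + 1), (((p + i).choose i : ℕ) : ℚ)
        = (((p + k + 1).choose k : ℕ) : ℚ) := by
      rw [← hstick p k]
      push_cast
      rfl
    simp only [mul_one]
    rw [this]
    congr 2
    omega

lemma coeff_inv_pow {B : PowerSeries ℚ} (hB : constantCoeff B = 0) (p : ℕ) (hp : 1 ≤ p)
    (m : ℕ) : coeff m (((1 - B)⁻¹) ^ p)
      = ∑ k ∈ range (m + 1), (((p - 1 + k).choose k : ℕ) : ℚ) * coeff m (B ^ k) := by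
  have h : p = (p - 1) + 1 := by omega
  rw [h, coeff_inv_pow_aux hB]
  simp


lemma monomial_eq' (n : ℕ) (a : ℚ) :
    (PowerSeries.monomial n) a = PowerSeries.C a * X ^ n := by
  ext i
  rw [PowerSeries.coeff_monomial, PowerSeries.coeff_C_mul_X_pow]

lemma mono_mul (m n : ℕ) (a c : ℚ) :
    (PowerSeries.monomial m) a * (PowerSeries.monomial n) c
      = (PowerSeries.monomial (m + n)) (a * c) := by
  rw [monomial_eq', monomial_eq', monomial_eq', map_mul, pow_add]
  ring

lemma prod_monomial {ι : Type*} (s : Finset ι) (e : ι → ℕ) (c : ι → ℚ) :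
    ∏ i ∈ s, (PowerSeries.monomial (e i)) (c i)
      = (PowerSeries.monomial (∑ i ∈ s, e i)) (∏ i ∈ s, c i) := by
  classical
  induction s using Finset.cons_induction with
  | empty => simp
  | cons a s ha ih =>
    rw [Finset.prod_cons, Finset.sum_cons, Finset.prod_cons, ih,
      mono_mul]

lemma monomial_pow (e : ℕ) (c : ℚ) (k : ℕ) :
    ((PowerSeries.monomial e) c) ^ k = (PowerSeries.monomial (e * k)) (c ^ k) := by
  induction k with
  | zero => simp
  | succ k ih =>
    rw [pow_succ, ih, mono_mul, ← pow_succ, Nat.mul_succ]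

/-- the truncated series -/
noncomputable def Btr (b : ℕ → ℚ) (n : ℕ) : PowerSeries ℚ :=
  ∑ j : Fin n, (PowerSeries.monomial ((j : ℕ) + 1)) (b ((j : ℕ) + 1))

lemma coeff_Btr (b : ℕ → ℚ) (n i : ℕ) (hi : i ≤ n) :
    coeff i (Btr b n) = if i = 0 then 0 else b i := by
  rw [Btr, map_sum]
  rcases Nat.eq_zero_or_pos i with h0 | hpos
  · subst h0
    simp [PowerSeries.coeff_monomial]
  · have hne : i ≠ 0 := by omega
    rw [if_neg hne]
    rw [Finset.sum_eq_single (⟨i - 1, by omega⟩ : Fin n)]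
    · rw [PowerSeries.coeff_monomial]
      have : i = (i - 1) + 1 := by omega
      simp [← this]
    · intro j _ hj
      rw [PowerSeries.coeff_monomial, if_neg]
      intro hc
      apply hj
      apply Fin.ext
      simp only []
      omega
    · intro h
      exact absurd (Finset.mem_univ _) h

lemma coeff_pow_B (b : ℕ → ℚ) (n k : ℕ) :
    coeff n ((PowerSeries.mk fun d => if d = 0 then (0:ℚ) else b d) ^ k)
      = ∑ v ∈ (partitionTuples n).filter (fun v => ∑ j, v j = k),
          ((Nat.multinomial Finset.univ v : ℕ) : ℚ) * ∏ j : Fin n, (b ((j : ℕ) + 1)) ^ (v j) := by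
  set B : PowerSeries ℚ := PowerSeries.mk fun d => if d = 0 then (0:ℚ) else b d with hBdef
  -- replace B by Btr
  have hdvd : (X : PowerSeries ℚ) ^ (n + 1) ∣ B - Btr b n := by
    rw [PowerSeries.X_pow_dvd_iff]
    intro i hi
    rw [map_sub, coeff_Btr b n i (by omega), hBdef, PowerSeries.coeff_mk, sub_self]
  have hstep : coeff n (B ^ k) = coeff n ((Btr b n) ^ k) := by
    have h2 : (X : PowerSeries ℚ) ^ (n + 1) ∣ B ^ k - (Btr b n) ^ k :=
      dvd_trans hdvd (sub_dvd_pow_sub_pow _ _ k)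
    have h3 : coeff n (B ^ k - (Btr b n) ^ k) = 0 :=
      PowerSeries.X_pow_dvd_iff.mp h2 n (by omega)
    rw [map_sub] at h3
    linarith
  rw [hstep, Btr, Finset.sum_pow_eq_sum_piAntidiag, map_sum]
  have hterm : ∀ w ∈ piAntidiag (univ : Finset (Fin n)) k,
      coeff n (((Nat.multinomial univ w : ℕ) : ℚ⟦X⟧) *
          ∏ j : Fin n, ((PowerSeries.monomial ((j:ℕ)+1)) (b ((j:ℕ)+1))) ^ (w j))
        = (if ∑ j : Fin n, ((j:ℕ)+1) * w j = n then
            ((Nat.multinomial Finset.univ w : ℕ) : ℚ) * ∏ j : Fin n, (b ((j:ℕ)+1)) ^ (w j)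
           else 0) := by
    intro w _
    have hprod : ∏ j : Fin n, ((PowerSeries.monomial ((j:ℕ)+1)) (b ((j:ℕ)+1))) ^ (w j)
        = (PowerSeries.monomial (∑ j : Fin n, ((j:ℕ)+1) * w j))
            (∏ j : Fin n, (b ((j:ℕ)+1)) ^ (w j)) := by
      rw [Finset.prod_congr rfl (fun (j : Fin n) _ => monomial_pow ((j:ℕ)+1) (b ((j:ℕ)+1)) (w j)),
        prod_monomial]
    rw [hprod]
    rw [← map_natCast PowerSeries.C (Nat.multinomial univ w), PowerSeries.coeff_C_mul,
      PowerSeries.coeff_monomial, mul_ite, mul_zero]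
    by_cases hc : ∑ j : Fin n, ((j:ℕ)+1) * w j = n
    · rw [if_pos hc.symm, if_pos hc]
    · rw [if_neg (fun hh => hc hh.symm), if_neg hc]
  rw [Finset.sum_congr rfl hterm, Finset.sum_ite, Finset.sum_const_zero, add_zero]
  apply Finset.sum_congr
  · ext w
    simp only [Finset.mem_filter, Finset.mem_piAntidiag, partitionTuples,
      Fintype.mem_piFinset, Finset.mem_range, Finset.mem_univ]
    constructor
    · rintro ⟨⟨hsum, -⟩, hwt⟩
      refine ⟨⟨fun j => ?_, hwt⟩, hsum⟩
      have h1 : w j ≤ ((j:ℕ)+1) * w j := Nat.le_mul_of_pos_left _ (by omega)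
      have h2 : ((j:ℕ)+1) * w j ≤ ∑ j : Fin n, ((j:ℕ)+1) * w j :=
        Finset.single_le_sum (f := fun j : Fin n => ((j:ℕ)+1) * w j)
          (fun _ _ => Nat.zero_le _) (Finset.mem_univ j)
      omega
    · rintro ⟨⟨-, hwt⟩, hsum⟩
      exact ⟨⟨hsum, fun i _ => trivial⟩, hwt⟩
  · intro w _
    rfl


-- pcomp algebra
lemma pcomp_one (F : PowerSeries ℚ) : pcomp F 1 = 1 := by
  ext m
  rw [coeff_pcomp]
  have : ∀ d ∈ range (m+1), coeff d (1 : ℚ⟦X⟧) * coeff m (F ^ d)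
      = if d = 0 then coeff m (F ^ d) else 0 := by
    intro d _
    rw [PowerSeries.coeff_one]
    split_ifs <;> simp
  rw [Finset.sum_congr rfl this, Finset.sum_ite_eq' (range (m+1)) 0]
  simp

lemma pcomp_sub (F G H : PowerSeries ℚ) : pcomp F (G - H) = pcomp F G - pcomp F H := by
  ext m
  rw [map_sub, coeff_pcomp, coeff_pcomp, coeff_pcomp, ← Finset.sum_sub_distrib]
  refine Finset.sum_congr rfl fun d _ => ?_
  rw [map_sub]
  ring

lemma pcomp_mul {F : PowerSeries ℚ} (hF : constantCoeff F = 0) (G H : PowerSeries ℚ) :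
    pcomp F (G * H) = pcomp F G * pcomp F H := by
  ext m
  rw [coeff_pcomp, key hF (coeff_pcomp F G) (coeff_pcomp F H) m]
  refine Finset.sum_congr rfl fun d _ => ?_
  rw [PowerSeries.coeff_mul]

lemma pcomp_pow {F : PowerSeries ℚ} (hF : constantCoeff F = 0) (G : PowerSeries ℚ) (k : ℕ) :
    pcomp F (G ^ k) = (pcomp F G) ^ k := by
  induction k with
  | zero => simpa using pcomp_one F
  | succ k ih => rw [pow_succ, pow_succ, pcomp_mul hF, ih]


end LagAux

open Finset in
open LagAux in
/-- Lagrange inversion: if `z = x(1 + ∑_{n≥1} a_n x^n)` is the compositional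
inverse of `x = z(1 - ∑_{n≥1} b_n z^n)`, i.e. `F - ∑_{n≥1} b_n F^{n+1} = X`
(the sum being computed coefficientwise, where only finitely many terms
contribute to each coefficient since `F` has zero constant term), then
`a_n = (1/(n+1)) ∑_λ C(n+k,k) ⬝ multinomial(k; k_1,…,k_n) ⬝ ∏_j b_j^{k_j}`,
summed over tuples `(k_1,…,k_n)` with `∑ j*k_j = n`, where `k = ∑ k_j`. -/
theorem lagrange_inversion (a b : ℕ → ℚ)
    (hinv : revSeries a = X + PowerSeries.mk
      (fun m => ∑ n ∈ Finset.Icc 1 m, b n * coeff m ((revSeries a) ^ (n + 1)))) :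
    ∀ n : ℕ, 1 ≤ n →
      a n = (1 / ((n : ℚ) + 1)) * ∑ v ∈ partitionTuples n,
        (((n + ∑ j, v j).choose (∑ j, v j) : ℕ) : ℚ) *
          ((Nat.multinomial Finset.univ v : ℕ) : ℚ) *
          ∏ j : Fin n, (b ((j : ℕ) + 1)) ^ (v j) := by
  intro n hn
  set F : PowerSeries ℚ := revSeries a with hFdef
  have hF0 : constantCoeff F = 0 := by
    rw [hFdef, revSeries, ← PowerSeries.coeff_zero_eq_constantCoeff_apply, PowerSeries.coeff_mk]
    simp
  have hF1 : coeff 1 F = 1 := by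
    rw [hFdef, revSeries, PowerSeries.coeff_mk]
    simp
  set B : PowerSeries ℚ := PowerSeries.mk fun d => if d = 0 then (0:ℚ) else b d with hBdef
  have hB0 : constantCoeff B = 0 := by
    rw [hBdef, ← PowerSeries.coeff_zero_eq_constantCoeff_apply, PowerSeries.coeff_mk]
    simp
  set W : PowerSeries ℚ := pcomp F B with hWdef
  set v : PowerSeries ℚ := 1 - W with hvdef
  have hW0 : constantCoeff W = 0 := by
    rw [hWdef, ← PowerSeries.coeff_zero_eq_constantCoeff_apply, coeff_pcomp,
      Finset.sum_range_one, hBdef, PowerSeries.coeff_mk, if_pos rfl, zero_mul]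
  have hv0 : constantCoeff v = 1 := by
    rw [hvdef, map_sub, map_one, hW0, sub_zero]
  -- the functional equation X = F * v
  have hFW : PowerSeries.mk
      (fun m => ∑ n ∈ Finset.Icc 1 m, b n * coeff m (F ^ (n + 1))) = F * W := by
    ext m
    rw [PowerSeries.coeff_mk, hWdef, coeff_mul_pcomp F F B hF0 m]
    have hsub : Finset.Icc 1 m ⊆ range (m + 1) := by
      intro d hd
      simp only [Finset.mem_Icc] at hd
      simp only [Finset.mem_range]
      omega
    rw [← Finset.sum_subset hsub (fun d hd hd2 => by
      have hd0 : d = 0 := by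
        simp only [Finset.mem_range] at hd
        simp only [Finset.mem_Icc] at hd2
        omega
      rw [hBdef, PowerSeries.coeff_mk, hd0, if_pos rfl, zero_mul])]
    refine Finset.sum_congr rfl fun d hd => ?_
    simp only [Finset.mem_Icc] at hd
    have hd0 : d ≠ 0 := by omega
    rw [hBdef, PowerSeries.coeff_mk, if_neg hd0, ← pow_succ']
  have heq : F = X + F * W := by
    rw [← hFW, hFdef]
    exact hinv
  have hX : F * v = X := by
    rw [hvdef]
    linear_combination heq
  -- inverse u
  set u : PowerSeries ℚ := v⁻¹ with hudef
  have hvne : constantCoeff v ≠ 0 := by rw [hv0]; norm_num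
  have hvu : v * u = 1 := PowerSeries.mul_inv_cancel v hvne
  have hFu : F = X * u := by
    calc F = F * (v * u) := by rw [hvu, mul_one]
    _ = (F * v) * u := by ring
    _ = X * u := by rw [hX]
  -- derivative
  set DF : PowerSeries ℚ := d⁄dX ℚ F with hDFdef
  set Dv : PowerSeries ℚ := d⁄dX ℚ v with hDvdef
  have hdiff : F * Dv + v * DF = 1 := by
    have hD := congrArg (d⁄dX ℚ) hX
    rw [Derivation.leibniz, PowerSeries.derivative_X, smul_eq_mul, smul_eq_mul] at hD
    exact hD
  have hkey2 : DF * v ^ 2 = v - X * Dv := by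
    have h2 : v * (F * Dv + v * DF) = v * 1 := by rw [hdiff]
    linear_combination h2 - Dv * hX
  -- residue lemma
  have hres : ∀ j : ℕ, coeff j (DF * v ^ (j + 1)) = if j = 0 then 1 else 0 := by
    intro j
    cases j with
    | zero =>
      simp only [zero_add, pow_one, if_pos]
      rw [PowerSeries.coeff_zero_eq_constantCoeff_apply, map_mul, hv0, mul_one,
        ← PowerSeries.coeff_zero_eq_constantCoeff_apply, hDFdef,
        PowerSeries.coeff_derivative, hF1]
      norm_num
    | succ i =>
      rw [if_neg (Nat.succ_ne_zero i)]
      have hrw : DF * v ^ (i + 1 + 1) = v ^ (i + 1) - X * (Dv * v ^ i) := by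
        calc DF * v ^ (i + 1 + 1) = (DF * v ^ 2) * v ^ i := by ring
        _ = (v - X * Dv) * v ^ i := by rw [hkey2]
        _ = v ^ (i + 1) - X * (Dv * v ^ i) := by ring
      rw [hrw, map_sub, PowerSeries.coeff_succ_X_mul]
      have hpow : coeff i (Dv * v ^ i) = coeff (i + 1) (v ^ (i + 1)) := by
        have hd : d⁄dX ℚ (v ^ (i + 1)) = (i + 1 : ℕ) • (v ^ i • Dv) := by
          rw [Derivation.leibniz_pow, hDvdef]
          norm_num
        have hc := congrArg (coeff i) hd
        rw [PowerSeries.coeff_derivative, map_nsmul, smul_eq_mul, nsmul_eq_mul] at hc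
        have hne : ((i:ℚ) + 1) ≠ 0 := by positivity
        have h5 : ((i:ℚ)+1) * coeff i (v ^ i * Dv) = ((i:ℚ)+1) * coeff (i+1) (v ^ (i+1)) := by
          push_cast at hc ⊢
          linarith
        have h6 := mul_left_cancel₀ hne h5
        rw [← h6]
        ring_nf
      rw [hpow, sub_self]
  -- main chain
  have hcoeffC : pcomp F (((1 - B)⁻¹) ^ (n + 1)) = u ^ (n + 1) := by
    have h1 : pcomp F (1 - B) = v := by
      rw [pcomp_sub, pcomp_one, hvdef, hWdef]
    have hBne : constantCoeff (1 - B) ≠ 0 := by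
      rw [map_sub, map_one, hB0, sub_zero]; norm_num
    have h2 : pcomp F ((1 - B)⁻¹) * v = 1 := by
      rw [← h1, ← pcomp_mul hF0, PowerSeries.inv_mul_cancel _ hBne, pcomp_one]
    have h3 : pcomp F ((1 - B)⁻¹) = u := by
      calc pcomp F ((1 - B)⁻¹) = pcomp F ((1 - B)⁻¹) * (v * u) := by rw [hvu, mul_one]
      _ = (pcomp F ((1 - B)⁻¹) * v) * u := by ring
      _ = u := by rw [h2, one_mul]
    rw [pcomp_pow hF0, h3]
  set Cs : PowerSeries ℚ := ((1 - B)⁻¹) ^ (n + 1) with hCdef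
  have hmain : coeff n DF = coeff n Cs := by
    have h1 : coeff n DF = coeff n ((DF * v ^ (n+1)) * pcomp F Cs) := by
      rw [hcoeffC]
      congr 1
      calc DF = DF * 1 := by rw [mul_one]
      _ = DF * (v * u) ^ (n+1) := by rw [hvu, one_pow]
      _ = (DF * v ^ (n+1)) * u ^ (n+1) := by rw [mul_pow]; ring
    rw [h1, coeff_mul_pcomp _ _ _ hF0]
    have h2 : ∀ d ∈ range (n + 1),
        coeff d Cs * coeff n (DF * v ^ (n+1) * F ^ d)
          = coeff d Cs * (if n - d = 0 then 1 else 0) := by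
      intro d hd
      simp only [Finset.mem_range] at hd
      have hdn : d ≤ n := by omega
      congr 1
      have hF2 : F ^ d = X ^ d * u ^ d := by rw [hFu, mul_pow]
      have hndd : n = (n - d) + d := by omega
      have hv2 : v ^ (n + 1) * u ^ d = v ^ ((n - d) + 1) := by
        have : v ^ (n + 1) = v ^ ((n-d) + 1) * v ^ d := by
          rw [← pow_add]
          congr 1
          omega
        rw [this]
        calc v ^ ((n-d) + 1) * v ^ d * u ^ d = v ^ ((n-d)+1) * (v * u) ^ d := by
              rw [mul_pow]; ring
        _ = v ^ ((n-d)+1) := by rw [hvu, one_pow, mul_one]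
      calc coeff n (DF * v ^ (n+1) * F ^ d)
          = coeff ((n - d) + d) (X ^ d * (DF * (v ^ (n+1) * u ^ d))) := by
            rw [← hndd, hF2]; congr 1; ring
      _ = coeff (n - d) (DF * (v ^ (n+1) * u ^ d)) := by
            rw [PowerSeries.coeff_X_pow_mul]
      _ = coeff (n - d) (DF * v ^ ((n-d) + 1)) := by rw [hv2]
      _ = (if n - d = 0 then 1 else 0) := hres (n - d)
    rw [Finset.sum_congr rfl h2]
    have h3 : ∀ d ∈ range (n+1), coeff d Cs * (if n - d = 0 then 1 else 0)
        = if d = n then coeff d Cs else 0 := by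
      intro d hd
      simp only [Finset.mem_range] at hd
      rcases eq_or_ne d n with h | h
      · subst h; simp
      · have : n - d ≠ 0 := by omega
        simp [h, this]
    rw [Finset.sum_congr rfl h3, Finset.sum_ite_eq' (range (n+1)) n]
    simp
  -- numerics
  have hDFn : coeff n DF = ((n:ℚ) + 1) * a n := by
    rw [hDFdef, PowerSeries.coeff_derivative, hFdef, revSeries, PowerSeries.coeff_mk]
    have h1 : n + 1 ≠ 0 := by omega
    have h2 : n + 1 ≠ 1 := by omega
    rw [if_neg h1, if_neg h2]
    have h3 : n + 1 - 1 = n := by omega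
    rw [h3]
    push_cast
    ring
  have hCsn : coeff n Cs = ∑ v_1 ∈ partitionTuples n,
      (((n + ∑ j, v_1 j).choose (∑ j, v_1 j) : ℕ) : ℚ) *
        ((Nat.multinomial Finset.univ v_1 : ℕ) : ℚ) *
        ∏ j : Fin n, (b ((j : ℕ) + 1)) ^ (v_1 j) := by
    rw [hCdef, coeff_inv_pow hB0 (n+1) (by omega) n]
    have h1 : ∀ k ∈ range (n+1), (((n + 1 - 1 + k).choose k : ℕ) : ℚ) * coeff n (B ^ k)
        = ∑ w ∈ (partitionTuples n).filter (fun w => ∑ j, w j = k),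
            (((n + ∑ j, w j).choose (∑ j, w j) : ℕ) : ℚ) *
              ((Nat.multinomial Finset.univ w : ℕ) : ℚ) *
              ∏ j : Fin n, (b ((j : ℕ) + 1)) ^ (w j) := by
      intro k _
      rw [hBdef, coeff_pow_B b n k, Finset.mul_sum]
      refine Finset.sum_congr rfl fun w hw => ?_
      simp only [Finset.mem_filter] at hw
      rw [hw.2]
      have : n + 1 - 1 + k = n + k := by omega
      rw [this]
      ring
    rw [Finset.sum_congr rfl h1]
    apply Finset.sum_fiberwise_of_maps_to
    intro w hw
    simp only [partitionTuples, Finset.mem_filter, Fintype.mem_piFinset, Finset.mem_range] at hw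
    simp only [Finset.mem_range]
    have : ∀ j : Fin n, w j ≤ ((j:ℕ)+1) * w j := fun j => Nat.le_mul_of_pos_left _ (by omega)
    calc ∑ j, w j ≤ ∑ j : Fin n, ((j:ℕ)+1) * w j := Finset.sum_le_sum (fun j _ => this j)
    _ = n := hw.2
    _ < n + 1 := by omega
  rw [hmain, hCsn] at hDFn
  have hne : ((n:ℚ) + 1) ≠ 0 := by positivity
  rw [hDFn]
  field_simp
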